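/- For an exterior algebra E = Λ(V) over a field 𝕜 and elements e_{i₁}, …, e_{i_k} of a basis of V, the derivation ∂ with ∂(eᵢ) = 1 satisfies ∂(e_{i₁}e_{i₂}⋯e_{i_k}) = (e_{i₁}−e_{i_k})(e_{i₂}−e_{i_k})⋯(e_{i_{k−1}}−e_{i_k}). -/
import Mathlib


open ExteriorAlgebra

/-- The exterior algebra `E = Λ(𝕜^α)`. -/
abbrev Ex (𝕜 : Type) [Field 𝕜] (α : Type) := ExteriorAlgebra 𝕜 (α → 𝕜)

/-- The distinguished degree-one generators `e_i` of the exterior algebra. -/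
noncomputable def gen (𝕜 : Type) [Field 𝕜] {α : Type} [DecidableEq α] (i : α) : Ex 𝕜 α :=
  ι 𝕜 (Pi.single i (1 : 𝕜))

/-- The derivation `∂` on the exterior algebra with `∂ e_i = 1` for all `i`
(contraction against the linear functional `v ↦ Σᵢ vᵢ`). -/
noncomputable def osd (𝕜 : Type) [Field 𝕜] {α : Type} [Fintype α] :
    Ex 𝕜 α →ₗ[𝕜] Ex 𝕜 α :=
  (CliffordAlgebra.contractRight (Q := (0 : QuadraticForm 𝕜 (α → 𝕜)))).flip
    (∑ i, LinearMap.proj i)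

section Aux

variable {𝕜 : Type} [Field 𝕜] {M : Type*} [AddCommGroup M] [Module 𝕜 M]

/-- `ι v * P * ι v = 0` when `P` is a product of `ι`'s. -/
lemma aux_A (L : List M) (v : M) :
    ι 𝕜 v * (L.map (ι 𝕜)).prod * ι 𝕜 v = 0 := by
  induction L generalizing v with
  | nil => simp [ι_sq_zero]
  | cons u t ih =>
    have hswap : ι 𝕜 v * ι 𝕜 u = -(ι 𝕜 u * ι 𝕜 v) :=
      eq_neg_of_add_eq_zero_left (by rw [add_comm]; exact ι_add_mul_swap u v)
    calc ι 𝕜 v * ((u :: t).map (ι 𝕜)).prod * ι 𝕜 v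
        = (ι 𝕜 v * ι 𝕜 u) * ((t.map (ι 𝕜)).prod * ι 𝕜 v) := by
          simp [mul_assoc]
      _ = -(ι 𝕜 u * (ι 𝕜 v * (t.map (ι 𝕜)).prod * ι 𝕜 v)) := by
          rw [hswap]; noncomm_ring
      _ = 0 := by rw [ih]; simp

/-- `ι v * P * ι w = -(ι w * P * ι v)` when `P` is a product of `ι`'s. -/
lemma aux_E (L : List M) (v w : M) :
    ι 𝕜 v * (L.map (ι 𝕜)).prod * ι 𝕜 w = -(ι 𝕜 w * (L.map (ι 𝕜)).prod * ι 𝕜 v) := by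
  induction L generalizing v w with
  | nil =>
    simpa [mul_one] using
      (eq_neg_of_add_eq_zero_left (by rw [add_comm]; exact ι_add_mul_swap w v) :
        ι 𝕜 v * ι 𝕜 w = -(ι 𝕜 w * ι 𝕜 v))
  | cons u t ih =>
    have hswap : ∀ x y : M, ι 𝕜 x * ι 𝕜 y = -(ι 𝕜 y * ι 𝕜 x) := fun x y =>
      eq_neg_of_add_eq_zero_left (by rw [add_comm]; exact ι_add_mul_swap y x)
    calc ι 𝕜 v * ((u :: t).map (ι 𝕜)).prod * ι 𝕜 w
        = (ι 𝕜 v * ι 𝕜 u) * ((t.map (ι 𝕜)).prod * ι 𝕜 w) := by simp [mul_assoc]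
      _ = -(ι 𝕜 u * (ι 𝕜 v * (t.map (ι 𝕜)).prod * ι 𝕜 w)) := by
          rw [hswap]; noncomm_ring
      _ = ι 𝕜 u * (ι 𝕜 w * (t.map (ι 𝕜)).prod * ι 𝕜 v) := by
          rw [ih]; noncomm_ring
      _ = -(ι 𝕜 w * ((u :: t).map (ι 𝕜)).prod * ι 𝕜 v) := by
          simp only [List.map_cons, List.prod_cons]
          rw [← mul_assoc (ι 𝕜 w) (ι 𝕜 u), hswap w u]
          noncomm_ring

lemma aux_prod_sub (L : List M) (w : M) :
    (L.map (fun u => ι 𝕜 u - ι 𝕜 w)).prod = ((L.map (· - w)).map (ι 𝕜)).prod := by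
  simp [List.map_map, Function.comp_def]

/-- `(∏ (ι u - ι w)) * ι w = (∏ ι u) * ι w`. -/
lemma aux_B (L : List M) (w : M) :
    (L.map (fun u => ι 𝕜 u - ι 𝕜 w)).prod * ι 𝕜 w = (L.map (ι 𝕜)).prod * ι 𝕜 w := by
  induction L with
  | nil => rfl
  | cons u t ih =>
    have h0 : ι 𝕜 w * (t.map (ι 𝕜)).prod * ι 𝕜 w = 0 := aux_A t w
    calc ((u :: t).map (fun u => ι 𝕜 u - ι 𝕜 w)).prod * ι 𝕜 w
        = (ι 𝕜 u - ι 𝕜 w) * ((t.map (fun u => ι 𝕜 u - ι 𝕜 w)).prod * ι 𝕜 w) := by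
          simp [mul_assoc]
      _ = (ι 𝕜 u - ι 𝕜 w) * ((t.map (ι 𝕜)).prod * ι 𝕜 w) := by rw [ih]
      _ = ι 𝕜 u * ((t.map (ι 𝕜)).prod * ι 𝕜 w) - ι 𝕜 w * (t.map (ι 𝕜)).prod * ι 𝕜 w := by
          rw [sub_mul, mul_assoc]
      _ = ((u :: t).map (ι 𝕜)).prod * ι 𝕜 w := by rw [h0]; simp [mul_assoc]

/-- The key algebraic identity. -/
lemma aux_key (L : List M) (v w : M) :
    (L.map (ι 𝕜)).prod * ι 𝕜 w - (L.map (fun u => ι 𝕜 u - ι 𝕜 w)).prod * ι 𝕜 v =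
      (L.map (fun u => ι 𝕜 u - ι 𝕜 v)).prod * (ι 𝕜 w - ι 𝕜 v) := by
  induction L generalizing v w with
  | nil => simp
  | cons u t ih =>
    have hA : ι 𝕜 v * (t.map (fun u => ι 𝕜 u - ι 𝕜 w)).prod * ι 𝕜 v = 0 := by
      rw [aux_prod_sub]; exact aux_A _ v
    have hE : ι 𝕜 w * (t.map (fun u => ι 𝕜 u - ι 𝕜 w)).prod * ι 𝕜 v =
        -(ι 𝕜 v * (t.map (fun u => ι 𝕜 u - ι 𝕜 w)).prod * ι 𝕜 w) := by
      rw [aux_prod_sub]; exact aux_E _ w v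
    have hB : (t.map (fun u => ι 𝕜 u - ι 𝕜 w)).prod * ι 𝕜 w = (t.map (ι 𝕜)).prod * ι 𝕜 w :=
      aux_B t w
    have hihw := ih v w
    have h1 : ι 𝕜 w * (t.map (fun u => ι 𝕜 u - ι 𝕜 w)).prod * ι 𝕜 v =
        -(ι 𝕜 v * ((t.map (ι 𝕜)).prod * ι 𝕜 w)) := by
      rw [hE, mul_assoc, hB]
    have h2 : ι 𝕜 v * ((t.map (fun u => ι 𝕜 u - ι 𝕜 v)).prod * (ι 𝕜 w - ι 𝕜 v)) =
        ι 𝕜 v * ((t.map (ι 𝕜)).prod * ι 𝕜 w) := by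
      rw [← hihw, mul_sub, ← mul_assoc (ι 𝕜 v) ((t.map (fun u => ι 𝕜 u - ι 𝕜 w)).prod), hA]
      simp [mul_assoc]
    simp only [List.map_cons, List.prod_cons]
    calc ι 𝕜 u * (t.map (ι 𝕜)).prod * ι 𝕜 w
          - (ι 𝕜 u - ι 𝕜 w) * (t.map (fun u => ι 𝕜 u - ι 𝕜 w)).prod * ι 𝕜 v
        = ι 𝕜 u * ((t.map (ι 𝕜)).prod * ι 𝕜 w - (t.map (fun u => ι 𝕜 u - ι 𝕜 w)).prod * ι 𝕜 v)
            + ι 𝕜 w * (t.map (fun u => ι 𝕜 u - ι 𝕜 w)).prod * ι 𝕜 v := by noncomm_ring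
      _ = ι 𝕜 u * ((t.map (fun u => ι 𝕜 u - ι 𝕜 v)).prod * (ι 𝕜 w - ι 𝕜 v))
            + -(ι 𝕜 v * ((t.map (ι 𝕜)).prod * ι 𝕜 w)) := by rw [hihw, h1]
      _ = ι 𝕜 u * ((t.map (fun u => ι 𝕜 u - ι 𝕜 v)).prod * (ι 𝕜 w - ι 𝕜 v))
            - ι 𝕜 v * ((t.map (fun u => ι 𝕜 u - ι 𝕜 v)).prod * (ι 𝕜 w - ι 𝕜 v)) := by
          rw [h2]; noncomm_ring
      _ = (ι 𝕜 u - ι 𝕜 v) * (t.map (fun u => ι 𝕜 u - ι 𝕜 v)).prod * (ι 𝕜 w - ι 𝕜 v) := by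
          noncomm_ring

end Aux

section Osd

variable (𝕜 : Type) [Field 𝕜] {α : Type} [Fintype α] [DecidableEq α]

lemma osd_mul_gen (x : Ex 𝕜 α) (a : α) :
    osd 𝕜 (x * gen 𝕜 a) = x - osd 𝕜 x * gen 𝕜 a := by
  have hd : (∑ i, LinearMap.proj (R := 𝕜) (φ := fun _ : α => 𝕜) i) (Pi.single a 1) = 1 := by
    simp [Finset.sum_pi_single']
  show CliffordAlgebra.contractRight (x * CliffordAlgebra.ι (0 : QuadraticForm 𝕜 (α → 𝕜)) (Pi.single a 1)) _ = _
  rw [CliffordAlgebra.contractRight_mul_ι, hd, one_smul]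
  rfl

lemma osd_one : osd 𝕜 (1 : Ex 𝕜 α) = 0 :=
  CliffordAlgebra.contractRight_one _ _

end Osd

/-- For distinct basis elements `e_{i₁}, …, e_{i_k}`, the derivation `∂` with `∂ eᵢ = 1`
satisfies `∂(e_{i₁} ⋯ e_{i_k}) = (e_{i₁} − e_{i_k})(e_{i₂} − e_{i_k}) ⋯ (e_{i_{k−1}} − e_{i_k})`. -/
theorem osd_prod_formula (𝕜 : Type) [Field 𝕜] {α : Type} [Fintype α] [DecidableEq α]
    (l : List α) (a : α) (hnd : (l ++ [a]).Nodup) :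
    osd 𝕜 (((l ++ [a]).map (gen 𝕜)).prod) =
      (l.map (fun i => gen 𝕜 i - gen 𝕜 a)).prod := by
  clear hnd
  induction l using List.reverseRecOn generalizing a with
  | nil =>
    have : ((([] : List α) ++ [a]).map (gen 𝕜)).prod = 1 * gen 𝕜 a := by simp
    rw [this, osd_mul_gen, osd_one]
    simp
  | append_singleton l' b ih =>
    have hsplit : ((l' ++ [b] ++ [a]).map (gen 𝕜)).prod =
        ((l' ++ [b]).map (gen 𝕜)).prod * gen 𝕜 a := by
      simp [List.map_append, List.prod_append, mul_assoc]
    rw [hsplit, osd_mul_gen, ih b]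
    have hkey := aux_key (𝕜 := 𝕜) (l'.map (fun i => Pi.single i (1 : 𝕜)))
      (Pi.single a 1) (Pi.single b 1)
    simp only [List.map_map, Function.comp_def] at hkey
    have h1 : ((l' ++ [b]).map (gen 𝕜)).prod = (l'.map (gen 𝕜)).prod * gen 𝕜 b := by
      simp [List.map_append, List.prod_append]
    have hg : List.map (gen 𝕜) l' = l'.map (fun i => ι 𝕜 (Pi.single i (1 : 𝕜))) := rfl
    rw [h1]
    show (l'.map (gen 𝕜)).prod * gen 𝕜 b
        - (l'.map (fun i => gen 𝕜 i - gen 𝕜 b)).prod * gen 𝕜 a = _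
    simp only [gen] at hkey ⊢
    rw [hg, hkey]
    simp [List.map_append, List.prod_append, mul_assoc]
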